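/- Given simplicial (non-metric) G-trees T and T' in the same deformation space, the following conditions are equivalent: (1) there exist morphisms f : T → T' and f' : T' → T; (2) T and T' have the same generalized edge groups; (3) T and T' have the same bi-elliptic groups. Moreover these conditions are satisfied whenever T and T' are both reduced. -/

import Mathlib

set_option autoImplicit false
set_option maxHeartbeats 1000000
open scoped Classical

universe u

section Trees

variable (G : Type u) [Group G]

/-- A (minimal, simplicial) `G`-tree: a simplicial tree together with an action of `G` by
simplicial automorphisms, without inversions, admitting no proper invariant subtree. -/
structure GTree : Type (u + 1) where
  V : Type u
  nonempty : Nonempty V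
  graph : SimpleGraph V
  isTree : graph.IsTree
  act : G →* Equiv.Perm V
  adj_act : ∀ (g : G) (u v : V), graph.Adj u v → graph.Adj (act g u) (act g v)
  noInversion : ∀ (g : G) (u v : V), graph.Adj u v → ¬(act g u = v ∧ act g v = u)
  minimal : ∀ S : Set V, S.Nonempty → (∀ (g : G), ∀ v ∈ S, act g v ∈ S) →
      (∀ u ∈ S, ∀ v ∈ S, ∀ p : graph.Walk u v, p.IsPath → ∀ w ∈ p.support, w ∈ S) →
      S = Set.univ

variable {G}

namespace GTree

variable (T : GTree G)

/-- The stabilizer of a vertex. -/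
def stab (v : T.V) : Subgroup G where
  carrier := {g : G | T.act g v = v}
  one_mem' := by simp
  mul_mem' := by
    intro a b ha hb
    simp only [Set.mem_setOf_eq, map_mul, Equiv.Perm.mul_apply] at *
    rw [hb, ha]
  inv_mem' := by
    intro a ha
    simp only [Set.mem_setOf_eq] at *
    have h : T.act a⁻¹ (T.act a v) = v := by
      rw [← Equiv.Perm.mul_apply, ← map_mul, inv_mul_cancel, map_one, Equiv.Perm.one_apply]
    rwa [ha] at h

/-- The (pointwise) stabilizer of an edge `uv`; since the action has no inversions this is
the full stabilizer of the edge. -/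
def edgeStab (u v : T.V) : Subgroup G := T.stab u ⊓ T.stab v

/-- A subgroup of `G` is elliptic if it fixes a vertex. -/
def Elliptic (H : Subgroup G) : Prop := ∃ v : T.V, ∀ h ∈ H, T.act h v = v

/-- An element of `G` is elliptic if it fixes a vertex. -/
def EllipticElt (g : G) : Prop := ∃ v : T.V, T.act g v = v

/-- An element of `G` is hyperbolic if it fixes no vertex. -/
def Hyperbolic (g : G) : Prop := ∀ v : T.V, T.act g v ≠ v

/-- A `G`-tree is reduced if whenever the stabilizer of an edge `uv` equals the stabilizer
of `u` (i.e. `G_u ≤ G_v`), the two endpoints are in the same orbit. -/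
def Reduced : Prop :=
  ∀ u v : T.V, T.graph.Adj u v → T.stab u ≤ T.stab v → ∃ g : G, T.act g u = v

/-- `T` is a single point. -/
protected def Trivial : Prop := ∀ u v : T.V, u = v

/-- `T` is a (simplicial) line. -/
def IsLine : Prop := ∀ v : T.V, ∃ a b : T.V, a ≠ b ∧ {w : T.V | T.graph.Adj v w} = {a, b}

/-- `G` fixes an end of `T`: there is an equivariant choice, for each vertex, of the next
vertex in the direction of the fixed end. -/
def FixesEnd : Prop :=
  ∃ next : T.V → T.V, (∀ v, T.graph.Adj v (next v)) ∧
    (∀ (g : G) (v : T.V), next (T.act g v) = T.act g (next v)) ∧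
    (∀ v, next (next v) ≠ v)

/-- Linear abelian type: `T` is a line on which `G` acts by translations (every element acts
either trivially or freely). -/
def LinearAbelian : Prop :=
  T.IsLine ∧ ∀ g : G, (∀ v : T.V, T.act g v = v) ∨ (∀ v : T.V, T.act g v ≠ v)

/-- Dihedral type: `T` is a line and some element acts as a reflection. -/
def Dihedral : Prop :=
  T.IsLine ∧ ∃ g : G, (∃ v : T.V, T.act g v = v) ∧ (∃ w : T.V, T.act g w ≠ w)

/-- Genuine abelian type: `G` fixes an end and `T` is not a line. -/
def GenuineAbelian : Prop := T.FixesEnd ∧ ¬T.IsLine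

/-- Irreducibility, via the characterization by hyperbolicity of a commutator. -/
def Irred : Prop :=
  ∃ g h : G, T.Hyperbolic g ∧ T.Hyperbolic h ∧ T.Hyperbolic (g * h * g⁻¹ * h⁻¹)

/-- The image of a dart (oriented edge) under the action of `g`. -/
def dartAct (g : G) (d : T.graph.Dart) : T.graph.Dart :=
  ⟨(T.act g d.toProd.1, T.act g d.toProd.2), T.adj_act g d.toProd.1 d.toProd.2 d.adj⟩

/-- Three oriented edges are aligned (in this order) if some geodesic crosses them
successively, with the correct orientations. -/
def Aligned (d₁ d₂ d₃ : T.graph.Dart) : Prop :=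
  ∃ (u v : T.V) (p : T.graph.Walk u v), p.IsPath ∧ [d₁, d₂, d₃].Sublist p.darts

end GTree

/-- Two `G`-trees lie in the same deformation space iff they have the same elliptic
subgroups. -/
def SameDef (T T' : GTree G) : Prop := ∀ H : Subgroup G, T.Elliptic H ↔ T'.Elliptic H

/-- An equivariant isomorphism of simplicial `G`-trees. -/
def SimpIso (T T' : GTree G) : Prop :=
  ∃ e : T.V ≃ T'.V, (∀ (g : G) (v : T.V), e (T.act g v) = T'.act g (e v)) ∧
    ∀ u v : T.V, T.graph.Adj u v ↔ T'.graph.Adj (e u) (e v)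

end Trees
section Collapses

variable {G : Type u} [Group G]

/-- Two ordered pairs of adjacent vertices span edges in the same `G`-orbit
(as non-oriented edges). -/
def InEdgeOrbit (T : GTree G) (a b c d : T.V) : Prop :=
  ∃ g : G, (T.act g a = c ∧ T.act g b = d) ∨ (T.act g a = d ∧ T.act g b = c)

/-- `c` exhibits `T'` as a (possibly non-elementary) collapse of `T`: it is equivariant,
surjective, sends non-collapsed edges to edges, is onto the edges of `T'`, and its point
preimages are subtrees. -/
def IsCollapseMap (T T' : GTree G) (c : T.V → T'.V) : Prop :=
  (∀ (g : G) (v : T.V), c (T.act g v) = T'.act g (c v)) ∧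
  Function.Surjective c ∧
  (∀ u v : T.V, T.graph.Adj u v → c u ≠ c v → T'.graph.Adj (c u) (c v)) ∧
  (∀ u' v' : T'.V, T'.graph.Adj u' v' → ∃ u v : T.V, T.graph.Adj u v ∧ c u = u' ∧ c v = v') ∧
  (∀ u v : T.V, c u = c v → ∀ p : T.graph.Walk u v, p.IsPath → ∀ w ∈ p.support, c w = c u)

/-- `T'` is obtained from `T` by a (possibly non-elementary) collapse. -/
def CollapseOf (T' T : GTree G) : Prop := ∃ c : T.V → T'.V, IsCollapseMap T T' c

/-- `T'` is obtained from `T` by collapsing (exactly) all the edges in the orbit of a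
single edge. -/
def IsOrbitCollapse (T' T : GTree G) : Prop :=
  ∃ (c : T.V → T'.V) (u₀ v₀ : T.V), T.graph.Adj u₀ v₀ ∧ IsCollapseMap T T' c ∧
    ∀ u v : T.V, T.graph.Adj u v → (c u = c v ↔ InEdgeOrbit T u v u₀ v₀)

/-- An elementary collapse: collapsing the orbit of a collapsible edge, i.e. an orbit
collapse staying in the same deformation space. -/
def ElemCollapse (T T' : GTree G) : Prop := IsOrbitCollapse T' T ∧ SameDef T T'

/-- An elementary move: an elementary collapse or an elementary expansion. -/
def ElemMove (T T' : GTree G) : Prop := ElemCollapse T T' ∨ ElemCollapse T' T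

/-- An elementary deformation: a finite sequence of elementary collapses and expansions. -/
def ElemDeformation (T T' : GTree G) : Prop := Relation.ReflTransGen ElemMove T T'

/-- A slide move: an edge `f = vx` with `G_f ≤ G_e` slides across `e = vw` (and
equivariantly so does its orbit), becoming an edge `f' = wx`. -/
def SlideMove (T T' : GTree G) : Prop :=
  ∃ (e : T.V ≃ T'.V) (v w x : T.V),
    T.graph.Adj v w ∧ T.graph.Adj v x ∧ w ≠ x ∧
    T.edgeStab v x ≤ T.edgeStab v w ∧
    ¬InEdgeOrbit T v w v x ∧
    (∀ (g : G) (u : T.V), e (T.act g u) = T'.act g (e u)) ∧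
    (∀ a b : T.V, T'.graph.Adj (e a) (e b) ↔
      ((T.graph.Adj a b ∧ ¬InEdgeOrbit T a b v x) ∨ InEdgeOrbit T a b w x))

end Collapses

section MetricTrees

variable (G : Type u) [Group G]

/-- A metric `G`-tree: a simplicial `G`-tree together with an equivariant assignment of
positive lengths to the edges. -/
structure MGTree extends GTree G : Type (u + 1) where
  len : V → V → ℝ
  len_symm : ∀ u v : V, len u v = len v u
  len_pos : ∀ u v : V, graph.Adj u v → 0 < len u v
  len_equivariant : ∀ (g : G) (u v : V), len (act g u) (act g v) = len u v

variable {G}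

namespace MGTree

variable (T : MGTree G)

/-- The length of a walk. -/
noncomputable def walkLen {u v : T.V} (p : T.graph.Walk u v) : ℝ :=
  (p.darts.map fun d => T.len d.toProd.1 d.toProd.2).sum

/-- The distance between two vertices: the length of the unique reduced path joining them. -/
noncomputable def dist (u v : T.V) : ℝ :=
  sInf {x : ℝ | ∃ p : T.graph.Walk u v, p.IsPath ∧ x = T.walkLen p}

/-- The translation length of `g`. -/
noncomputable def ell (g : G) : ℝ :=
  sInf {x : ℝ | ∃ v : T.V, x = T.dist v (T.act g v)}

/-- The axis (or characteristic set) of `g`: the set of points moved exactly `ℓ(g)`. -/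
def Axis (g : G) : Set T.V := {v : T.V | T.dist v (T.act g v) = T.ell g}

/-- `T` is abelian: its length function is the absolute value of a homomorphism to `ℝ`
with cyclic image. -/
def IsAbelian : Prop :=
  ∃ φ : G → ℝ, (∀ g h : G, φ (g * h) = φ g + φ h) ∧
    (∃ a : ℝ, ∀ g : G, ∃ n : ℤ, φ g = (n : ℝ) * a) ∧
    ∀ g : G, T.ell g = |φ g|

/-- Irreducibility for metric trees: two hyperbolic elements with disjoint axes. -/
def Irr : Prop :=
  ∃ g h : G, T.toGTree.Hyperbolic g ∧ T.toGTree.Hyperbolic h ∧ T.Axis g ∩ T.Axis h = ∅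

end MGTree

/-- An equivariant simplicial isomorphism multiplying all edge lengths by `c`. -/
def EquivHomothety (c : ℝ) (T T' : MGTree G) : Prop :=
  ∃ e : T.V ≃ T'.V, (∀ (g : G) (v : T.V), e (T.act g v) = T'.act g (e v)) ∧
    (∀ u v : T.V, T.graph.Adj u v ↔ T'.graph.Adj (e u) (e v)) ∧
    ∀ u v : T.V, T.graph.Adj u v → T'.len (e u) (e v) = c * T.len u v

/-- An equivariant isometry of metric `G`-trees. -/
def EquivIsometric (T T' : MGTree G) : Prop := EquivHomothety 1 T T'

/-- The action of an automorphism of `G` on metric `G`-trees, by precomposition. -/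
def MGTree.precomp (φ : MulAut G) (T : MGTree G) : MGTree G where
  V := T.V
  nonempty := T.nonempty
  graph := T.graph
  isTree := T.isTree
  act := T.act.comp φ.toMonoidHom
  adj_act := fun g u v h => T.adj_act (φ g) u v h
  noInversion := fun g u v h => T.noInversion (φ g) u v h
  minimal := fun S h1 h2 h3 => T.minimal S h1
    (fun g v hv => by simpa using h2 (φ.symm g) v hv) h3
  len := T.len
  len_symm := T.len_symm
  len_pos := T.len_pos
  len_equivariant := fun g u v => T.len_equivariant (φ g) u v

end MetricTrees
section Topologies

variable (G : Type u) [Group G]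

/-- Basic Gromov–Hausdorff neighbourhood of the metric `G`-tree `T` determined by finite
sets `X ⊆ T`, `A ⊆ G` and `ε > 0`: the trees admitting an `ε`-approximate equivariant
lift of `X`. -/
def gromovBasic (T : MGTree G) (X : Finset T.V) (A : Finset G) (ε : ℝ) : Set (MGTree G) :=
  {T' : MGTree G | ∃ f : T.V → T'.V, ∀ x ∈ X, ∀ y ∈ X, ∀ g ∈ A,
    |T.dist x (T.act g y) - T'.dist (f x) (T'.act g (f y))| < ε}

/-- The equivariant Gromov–Hausdorff topology on the space of metric `G`-trees. -/
noncomputable def gromovTop : TopologicalSpace (MGTree G) where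
  IsOpen U := ∀ T ∈ U, ∃ (X : Finset T.V) (A : Finset G) (ε : ℝ), 0 < ε ∧
    gromovBasic G T X A ε ⊆ U
  isOpen_univ := fun T _ => ⟨∅, ∅, 1, one_pos, Set.subset_univ _⟩
  isOpen_inter := by
    intro U V hU hV T hT
    obtain ⟨X₁, A₁, ε₁, hε₁, h₁⟩ := hU T hT.1
    obtain ⟨X₂, A₂, ε₂, hε₂, h₂⟩ := hV T hT.2
    refine ⟨X₁ ∪ X₂, A₁ ∪ A₂, min ε₁ ε₂, lt_min hε₁ hε₂, ?_⟩
    intro T' hT'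
    obtain ⟨f, hf⟩ := hT'
    constructor
    · exact h₁ ⟨f, fun x hx y hy g hg =>
        lt_of_lt_of_le (hf x (Finset.mem_union_left _ hx) y (Finset.mem_union_left _ hy) g
          (Finset.mem_union_left _ hg)) (min_le_left _ _)⟩
    · exact h₂ ⟨f, fun x hx y hy g hg =>
        lt_of_lt_of_le (hf x (Finset.mem_union_right _ hx) y (Finset.mem_union_right _ hy) g
          (Finset.mem_union_right _ hg)) (min_le_right _ _)⟩
  isOpen_sUnion := by
    intro s hs T hT
    obtain ⟨U, hUs, hTU⟩ := hT
    obtain ⟨X, A, ε, hε, h⟩ := hs U hUs T hTU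
    exact ⟨X, A, ε, hε, h.trans (Set.subset_sUnion_of_mem hUs)⟩

variable {G}

/-- The closed cone of the (restricted) deformation space `D` spanned by `T`: the trees
of `D` obtained from trees having the same underlying simplicial tree as `T` by
(elementary) collapses. -/
def closedCone (D : Set (MGTree G)) (T : MGTree G) : Set (MGTree G) :=
  {T' : MGTree G | T' ∈ D ∧ CollapseOf T'.toGTree T.toGTree}

/-- The open cone containing `T`: the trees with the same underlying simplicial tree. -/
def openCone (D : Set (MGTree G)) (T : MGTree G) : Set (MGTree G) :=
  {T' : MGTree G | T' ∈ D ∧ SimpIso T'.toGTree T.toGTree}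

variable (G)

/-- The weak topology on a deformation space `D`: a set is closed if and only if its
intersection with every closed cone of `D` is closed (each closed cone carrying the
Gromov topology). -/
noncomputable def weakTop (D : Set (MGTree G)) : TopologicalSpace ↥D :=
  ⨆ (T : MGTree G) (_ : T ∈ D), TopologicalSpace.coinduced
    (fun x : {S : MGTree G // S ∈ closedCone D T} => (⟨x.1, x.2.1⟩ : ↥D))
    (TopologicalSpace.induced (fun x : {S : MGTree G // S ∈ closedCone D T} => x.1)
      (gromovTop G))

variable {G}

/-- The projectivizing relation on a deformation space: agreement up to rescaling, i.e.
equivariant homothety. -/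
def projRel (D : Set (MGTree G)) (a b : ↥D) : Prop :=
  ∃ c : ℝ, 0 < c ∧ EquivHomothety c a.1 b.1

/-- The relation of equivariant isometry on a deformation space. -/
def isomRel (D : Set (MGTree G)) (a b : ↥D) : Prop := EquivIsometric a.1 b.1

end Topologies

section Morphisms

variable {G : Type u} [Group G]

/-- A morphism of simplicial `G`-trees: an equivariant map sending each edge onto a
non-degenerate edge path (obtained by subdividing the edge into finitely many subsegments,
each mapped bijectively onto an edge). -/
structure GMorphism (T T' : GTree G) where
  f : T.V → T'.V
  equivariant : ∀ (g : G) (v : T.V), f (T.act g v) = T'.act g (f v)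
  edgeWalk : ∀ u v : T.V, T.graph.Adj u v → T'.graph.Walk (f u) (f v)
  edgeWalk_ne_nil : ∀ (u v : T.V) (h : T.graph.Adj u v), ¬(edgeWalk u v h).Nil
  edgeWalk_symm : ∀ (u v : T.V) (h : T.graph.Adj u v),
    (edgeWalk v u h.symm).support = (edgeWalk u v h).support.reverse
  edgeWalk_equivariant : ∀ (g : G) (u v : T.V) (h : T.graph.Adj u v),
    (edgeWalk (T.act g u) (T.act g v) (T.adj_act g u v h)).support =
      (edgeWalk u v h).support.map (fun x => T'.act g x)

/-- `H` is bi-elliptic in `T`: it fixes two distinct points. -/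
def BiElliptic (T : GTree G) (H : Subgroup G) : Prop :=
  ∃ u v : T.V, u ≠ v ∧ ∀ h ∈ H, T.act h u = u ∧ T.act h v = v

/-- `H` is a generalized edge group of `T`: it is squeezed between two edge stabilizers. -/
def GenEdgeGroup (T : GTree G) (H : Subgroup G) : Prop :=
  ∃ u v u' v' : T.V, T.graph.Adj u v ∧ T.graph.Adj u' v' ∧
    T.edgeStab u v ≤ H ∧ H ≤ T.edgeStab u' v'

/-- `H` belongs to `𝒜_min` (relative to the deformation space of `T₀`): it fixes an edge
in every tree of the deformation space. -/
def Amin (T₀ : GTree G) (H : Subgroup G) : Prop :=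
  ∀ T : GTree G, SameDef T₀ T → ∃ u v : T.V, T.graph.Adj u v ∧ H ≤ T.edgeStab u v

/-- A maximal elliptic subgroup (of the deformation space of `T₀`). -/
def MaxElliptic (T₀ : GTree G) (H : Subgroup G) : Prop :=
  T₀.Elliptic H ∧ ∀ K : Subgroup G, T₀.Elliptic K → H ≤ K → K = H

end Morphisms

section OutG

variable (G : Type u) [Group G]

instance innRange_normal : ((MulAut.conj : G →* MulAut G).range).Normal := by
  constructor
  intro a ha φ
  obtain ⟨g, rfl⟩ := ha
  refine ⟨φ g, ?_⟩
  ext x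
  simp only [MulAut.mul_apply, MulAut.conj_apply, map_mul, map_inv]
  simp [MulAut.inv_def]

/-- The outer automorphism group of `G`. -/
def OutG := MulAut G ⧸ (MulAut.conj : G →* MulAut G).range

noncomputable instance : Group (OutG G) := QuotientGroup.Quotient.group _

/-- The class of an automorphism in `Out(G)`. -/
def toOutG (φ : MulAut G) : OutG G := QuotientGroup.mk φ

end OutG
section RealTrees

variable (G : Type u) [Group G]

/-- A non-trivial minimal `ℝ`-tree with an isometric action of `G`: a geodesic metric
space in which any two points are joined by a unique arc. -/
structure RGTree : Type (u + 1) where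
  X : Type u
  [ms : MetricSpace X]
  nontrivial : Nontrivial X
  geodesic : ∀ x y : X, ∃ f : ℝ → X, f 0 = x ∧ f (dist x y) = y ∧
    ∀ s ∈ Set.Icc (0 : ℝ) (dist x y), ∀ t ∈ Set.Icc (0 : ℝ) (dist x y),
      dist (f s) (f t) = |s - t|
  unique_arc : ∀ (x y : X) (γ : Set.Icc (0 : ℝ) 1 → X), Continuous γ →
    Function.Injective γ → γ ⟨0, by constructor <;> norm_num⟩ = x →
    γ ⟨1, by constructor <;> norm_num⟩ = y →
    ∀ z ∈ Set.range γ, dist x z + dist z y = dist x y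
  act : G →* Equiv.Perm X
  isom : ∀ g : G, Isometry (act g)
  minimal : ∀ S : Set X, S.Nonempty → (∀ (g : G), ∀ x ∈ S, act g x ∈ S) →
    (∀ x ∈ S, ∀ y ∈ S, ∀ z : X, dist x z + dist z y = dist x y → z ∈ S) →
    S = Set.univ

attribute [instance] RGTree.ms

variable {G}

namespace RGTree

variable (R : RGTree G)

/-- `z` lies between `x` and `y` (i.e. on the arc from `x` to `y`). -/
def Btw (x z y : R.X) : Prop := dist x z + dist z y = dist x y

/-- A subgroup is elliptic if it fixes a point. -/
def Elliptic (H : Subgroup G) : Prop := ∃ x : R.X, ∀ h ∈ H, R.act h x = x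

/-- A hyperbolic element fixes no point. -/
def Hyperbolic (g : G) : Prop := ∀ x : R.X, R.act g x ≠ x

/-- The translation length of `g`. -/
noncomputable def ell (g : G) : ℝ :=
  sInf {r : ℝ | ∃ x : R.X, r = dist x (R.act g x)}

/-- The characteristic set of `g`: its axis if `g` is hyperbolic, its fixed point set
if `g` is elliptic. -/
def Axis (g : G) : Set R.X := {x : R.X | dist x (R.act g x) = R.ell g}

/-- The fixed point set of `g`. -/
def Fix (g : G) : Set R.X := {x : R.X | R.act g x = x}

/-- The fixed point set of a subgroup. -/
def FixSub (H : Subgroup G) : Set R.X := {x : R.X | ∀ h ∈ H, R.act h x = x}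

/-- Irreducibility: two hyperbolic elements with disjoint characteristic sets. -/
def Irr : Prop :=
  ∃ g h : G, R.Hyperbolic g ∧ R.Hyperbolic h ∧ R.Axis g ∩ R.Axis h = ∅

/-- The distance between the characteristic sets of `g` and `h`. -/
noncomputable def axesDist (g h : G) : ℝ :=
  sInf {r : ℝ | ∃ x ∈ R.Axis g, ∃ y ∈ R.Axis h, r = dist x y}

end RGTree

/-- `f` realizes the metric simplicial `G`-tree `T` inside the `ℝ`-tree `R`. -/
def IsRealizationMap (R : RGTree G) (T : MGTree G) (f : T.V → R.X) : Prop :=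
  (∀ (g : G) (v : T.V), f (T.act g v) = R.act g (f v)) ∧
  (∀ u v : T.V, dist (f u) (f v) = T.dist u v) ∧
  ∀ x : R.X, ∃ u v : T.V, T.graph.Adj u v ∧ R.Btw (f u) x (f v)

/-- The `ℝ`-tree `R` is (equivariantly isometric to) the geometric realization of the
metric simplicial `G`-tree `T`. -/
def RealizationOf (R : RGTree G) (T : MGTree G) : Prop := ∃ f : T.V → R.X, IsRealizationMap R T f

variable (G)

/-- The equivariant Gromov–Hausdorff topology on the space of `ℝ`-trees. -/
noncomputable def gromovTopR : TopologicalSpace (RGTree G) where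
  IsOpen U := ∀ R ∈ U, ∃ (X : Finset R.X) (A : Finset G) (ε : ℝ), 0 < ε ∧
    {R' : RGTree G | ∃ f : R.X → R'.X, ∀ x ∈ X, ∀ y ∈ X, ∀ g ∈ A,
      |dist x (R.act g y) - dist (f x) (R'.act g (f y))| < ε} ⊆ U
  isOpen_univ := fun R _ => ⟨∅, ∅, 1, one_pos, Set.subset_univ _⟩
  isOpen_inter := by
    intro U V hU hV R hR
    obtain ⟨X₁, A₁, ε₁, hε₁, h₁⟩ := hU R hR.1
    obtain ⟨X₂, A₂, ε₂, hε₂, h₂⟩ := hV R hR.2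
    refine ⟨X₁ ∪ X₂, A₁ ∪ A₂, min ε₁ ε₂, lt_min hε₁ hε₂, ?_⟩
    rintro R' ⟨f, hf⟩
    constructor
    · exact h₁ ⟨f, fun x hx y hy g hg =>
        lt_of_lt_of_le (hf x (Finset.mem_union_left _ hx) y (Finset.mem_union_left _ hy) g
          (Finset.mem_union_left _ hg)) (min_le_left _ _)⟩
    · exact h₂ ⟨f, fun x hx y hy g hg =>
        lt_of_lt_of_le (hf x (Finset.mem_union_right _ hx) y (Finset.mem_union_right _ hy) g
          (Finset.mem_union_right _ hg)) (min_le_right _ _)⟩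
  isOpen_sUnion := by
    intro s hs R hR
    obtain ⟨U, hUs, hRU⟩ := hR
    obtain ⟨X, A, ε, hε, h⟩ := hs U hUs R hRU
    exact ⟨X, A, ε, hε, h.trans (Set.subset_sUnion_of_mem hUs)⟩

/-- The axes topology: the coarsest topology making all translation length functions
continuous. -/
noncomputable def axesTopR : TopologicalSpace (RGTree G) :=
  TopologicalSpace.induced (fun (R : RGTree G) (g : G) => R.ell g) Pi.topologicalSpace

variable {G}

/-- A morphism of `ℝ`-trees: an equivariant map such that every segment is a finite union
of subsegments on each of which the map is isometric. -/
structure RMorphism (R S : RGTree G) where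
  f : R.X → S.X
  equivariant : ∀ (g : G) (x : R.X), f (R.act g x) = S.act g (f x)
  piecewise : ∀ x y : R.X, ∃ (n : ℕ) (c : Fin (n + 1) → R.X),
    c 0 = x ∧ c (Fin.last n) = y ∧ (∀ i : Fin (n + 1), R.Btw x (c i) y) ∧
    ∀ i : Fin n, ∀ p q : R.X, R.Btw (c i.castSucc) p (c i.succ) →
      R.Btw (c i.castSucc) q (c i.succ) → dist (f p) (f q) = dist p q

/-- `M` is the intermediate tree at time `t` of Skora's deformation of the morphism `φ`:
the quotient of the source in which `x` and `y` are identified exactly when `φ` maps the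
segment `[x,y]` into the ball of radius `t` around `φ(x) = φ(y)`. -/
def IsSkoraIntermediate {R S : RGTree G} (φ : RMorphism R S) (t : ℝ) (M : RGTree G) : Prop :=
  ∃ (p : R.X → M.X) (q : M.X → S.X), Function.Surjective p ∧
    (∀ (g : G) (x : R.X), p (R.act g x) = M.act g (p x)) ∧
    (∀ (g : G) (m : M.X), q (M.act g m) = S.act g (q m)) ∧
    (∀ x : R.X, q (p x) = φ.f x) ∧
    (∀ x y : R.X, dist (p x) (p y) ≤ dist x y) ∧
    (∀ m m' : M.X, dist (q m) (q m') ≤ dist m m') ∧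
    ∀ x y : R.X, p x = p y ↔ (φ.f x = φ.f y ∧
      ∀ z : R.X, R.Btw x z y → dist (φ.f z) (φ.f x) ≤ t)

/-- `P` is the basepoint of `R` determined by `g` and `h` (the endpoint of the
intersection of the two characteristic sets, resp. the projection of one onto the other),
characterized by the metric system (1) of [Guirardel–Levitt]. -/
noncomputable def IsBasepoint (R : RGTree G) (g h : G) (P : R.X) : Prop :=
  dist P (R.act g P) = R.ell g ∧
  dist P (R.act h P) = R.ell h + 2 * R.axesDist g h ∧
  dist (R.act g P) (R.act h P) = R.ell g + R.ell h + 2 * R.axesDist g h ∧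
  dist (R.act g P) (R.act h⁻¹ P) = R.ell g + R.ell h + 2 * R.axesDist g h

/-- `p` is a projection of `x` to the set `S` (a closest point of `S`). -/
def IsProj (R : RGTree G) (x : R.X) (S : Set R.X) (p : R.X) : Prop :=
  p ∈ S ∧ ∀ q ∈ S, dist x p ≤ dist x q

/-- Equivariant isometry of `ℝ`-trees. -/
def RIsom (R R' : RGTree G) : Prop :=
  ∃ e : R.X ≃ R'.X, (∀ (g : G) (x : R.X), e (R.act g x) = R'.act g (e x)) ∧
    ∀ x y : R.X, dist (e x) (e y) = dist x y

/-- Equivariant homothety of `ℝ`-trees, with ratio `c`. -/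
def RHomothety (c : ℝ) (R R' : RGTree G) : Prop :=
  ∃ e : R.X ≃ R'.X, (∀ (g : G) (x : R.X), e (R.act g x) = R'.act g (e x)) ∧
    ∀ x y : R.X, dist (e x) (e y) = c * dist x y

end RealTrees
section MoreDefs

variable {G : Type u} [Group G]

/-- `H` is contained in a conjugate of `K`. -/
def ConjLe (H K : Subgroup G) : Prop := ∃ g : G, ∀ h ∈ H, g * h * g⁻¹ ∈ K

/-- `H` represents a maximal element of the vertical set `ℳ` associated to the
deformation space of `T₀`. -/
def MaxVert (T₀ : GTree G) (H : Subgroup G) : Prop :=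
  T₀.Elliptic H ∧ ∀ K : Subgroup G, T₀.Elliptic K → ConjLe H K → ConjLe K H

/-- The vertical set `ℳ`: equivalence classes of maximal elements for containment in a
conjugate, among elliptic subgroups. -/
def vertSet (T₀ : GTree G) : Type u :=
  Quot (fun H K : {H : Subgroup G // MaxVert T₀ H} => ConjLe H.1 K.1 ∧ ConjLe K.1 H.1)

namespace GTree

variable (T : GTree G)

/-- The set of `G`-orbits of vertices (the vertices of the quotient graph `T/G`). -/
def vertexOrbits : Type u := Quot (fun u v : T.V => ∃ g : G, T.act g u = v)

/-- Orbits of neighbours of `v` under the stabilizer of `v`: the oriented edges of the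
quotient graph of groups issued from the image of `v`, whose number is the valence of
the image of `v`. -/
def nbrOrbits (v : T.V) : Type u :=
  Quot (fun a b : {w : T.V // T.graph.Adj v w} => ∃ g : G, T.act g v = v ∧ T.act g a.1 = b.1)

/-- The set of `G`-orbits of (non-oriented) edges. -/
def edgeOrbits : Type u :=
  Quot (fun d d' : T.graph.Dart => ∃ g : G, T.dartAct g d = d' ∨ T.dartAct g d = d'.symm)

/-- BF-reduced: if an edge-to-vertex inclusion `G_e → G_u` is onto, then the image of `u`
in the quotient graph has valence at least 3. -/
def BFReduced : Prop :=
  ∀ u w : T.V, T.graph.Adj u w → T.stab u ≤ T.stab w →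
    3 ≤ Cardinal.mk (T.nbrOrbits u)

end GTree

/-- The quotient graph of groups of `T` has a strict ascending loop: an edge whose
endpoints are in the same orbit, exactly one of the two edge-to-vertex inclusions
being onto. -/
def HasSAL (T : GTree G) : Prop :=
  ∃ u v : T.V, T.graph.Adj u v ∧ (∃ g : G, T.act g u = v) ∧
    Xor' (T.stab u ≤ T.stab v) (T.stab v ≤ T.stab u)

/-- The edge (orbit of) `uv` is a surviving edge: `T` can be made reduced by a collapse
(within its deformation space) not collapsing `uv`. -/
def Surviving (T : GTree G) (u v : T.V) : Prop :=
  ∃ (T' : GTree G) (c : T.V → T'.V), IsCollapseMap T T' c ∧ SameDef T T' ∧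
    T'.Reduced ∧ c u ≠ c v

/-- Containment in a conjugate by an element of `G₀`. -/
def perLe (G₀ : Subgroup G) (H K : Subgroup G) : Prop :=
  ∃ g ∈ G₀, ∀ h ∈ H, g * h * g⁻¹ ∈ K

/-- `H` represents a maximal element of the peripheral structure `ℳ₀` of `G₀`. -/
def PeriphMax (T₀ : GTree G) (G₀ : Subgroup G) (H : Subgroup G) : Prop :=
  H ≤ G₀ ∧ Amin T₀ H ∧
    ∀ K : Subgroup G, K ≤ G₀ → Amin T₀ K → perLe G₀ H K → perLe G₀ K H

/-- The peripheral structure `ℳ₀` of `G₀`, as a set of equivalence classes. -/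
def periphSet (T₀ : GTree G) (G₀ : Subgroup G) : Type u :=
  Quot (fun H K : {H : Subgroup G // PeriphMax T₀ G₀ H} =>
    perLe G₀ H.1 K.1 ∧ perLe G₀ K.1 H.1)

end MoreDefs

section Prop48Aux



open SimpleGraph

namespace GTree

variable {G : Type u} [Group G]

/-- canonical geodesic -/
noncomputable def geo (T : GTree G) (u v : T.V) : T.graph.Walk u v :=
  (T.isTree.existsUnique_path u v).choose

lemma geo_isPath (T : GTree G) (u v : T.V) : (T.geo u v).IsPath :=
  (T.isTree.existsUnique_path u v).choose_spec.1

lemma geo_eq (T : GTree G) {u v : T.V} (p : T.graph.Walk u v) (hp : p.IsPath) :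
    p = T.geo u v :=
  (T.isTree.existsUnique_path u v).choose_spec.2 p hp

lemma geo_nil (T : GTree G) (u : T.V) : T.geo u u = Walk.nil :=
  (T.geo_eq Walk.nil (by simp)).symm

lemma geo_adj (T : GTree G) {u v : T.V} (h : T.graph.Adj u v) :
    T.geo u v = Walk.cons h Walk.nil :=
  (T.geo_eq _ (by simp [Walk.cons_isPath_iff, h.ne])).symm

lemma geo_reverse (T : GTree G) (u v : T.V) : (T.geo u v).reverse = T.geo v u :=
  T.geo_eq _ (T.geo_isPath u v).reverse

/-- action as graph hom -/
def actHom (T : GTree G) (g : G) : T.graph →g T.graph :=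
  ⟨fun v => T.act g v, fun {a b} h => T.adj_act g a b h⟩

@[simp] lemma actHom_apply (T : GTree G) (g : G) (v : T.V) : T.actHom g v = T.act g v := rfl

lemma geo_map (T : GTree G) (g : G) (u v : T.V) :
    (T.geo u v).map (T.actHom g) = T.geo (T.act g u) (T.act g v) :=
  T.geo_eq _ (Walk.map_isPath_of_injective (by intro a b hab; exact (T.act g).injective hab)
    (T.geo_isPath u v))

lemma support_geo_act (T : GTree G) (g : G) (u v : T.V) :
    (T.geo (T.act g u) (T.act g v)).support = (T.geo u v).support.map (fun w => T.act g w) := by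
  rw [← geo_map]
  exact Walk.support_map _ _

lemma list_map_fix {α : Type u} (f : α → α) (l : List α) (h : l.map f = l) :
    ∀ x ∈ l, f x = x := by
  induction l with
  | nil => simp
  | cons a l ih =>
    simp only [List.map_cons, List.cons.injEq] at h
    intro x hx
    rcases List.mem_cons.mp hx with rfl | hx
    · exact h.1
    · exact ih h.2 x hx

lemma act_fix_geo (T : GTree G) {g : G} {u v : T.V} (hu : T.act g u = u) (hv : T.act g v = v) :
    ∀ w ∈ (T.geo u v).support, T.act g w = w := by
  have h1 : (((T.geo u v).map (T.actHom g)).copy hu hv).IsPath := by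
    refine (Walk.isPath_copy ..).mpr ?_
    exact Walk.map_isPath_of_injective (by intro a b hab; exact (T.act g).injective hab) (T.geo_isPath u v)
  have h2 := T.geo_eq _ h1
  have h3 : (T.geo u v).support.map (fun w => T.act g w) = (T.geo u v).support := by
    conv_rhs => rw [← h2]
    exact ((Walk.support_copy (Walk.map (T.actHom g) (T.geo u v)) hu hv).trans (Walk.support_map (T.actHom g) (T.geo u v))).symm
  exact list_map_fix _ _ h3

lemma mem_stab (T : GTree G) {g : G} {v : T.V} : g ∈ T.stab v ↔ T.act g v = v := Iff.rfl

lemma mem_edgeStab (T : GTree G) {g : G} {u v : T.V} :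
    g ∈ T.edgeStab u v ↔ T.act g u = u ∧ T.act g v = v := by
  rw [GTree.edgeStab, Subgroup.mem_inf]
  exact Iff.rfl

lemma act_inv_eq (T : GTree G) {g : G} {a b : T.V} (h : T.act g a = b) : T.act g⁻¹ b = a := by
  subst h
  rw [← Equiv.Perm.mul_apply, ← map_mul, inv_mul_cancel, map_one, Equiv.Perm.one_apply]

lemma act_mul (T : GTree G) (g h : G) (v : T.V) :
    T.act (g * h) v = T.act g (T.act h v) := by
  rw [map_mul, Equiv.Perm.mul_apply]

end GTree
open SimpleGraph
namespace GTree
variable {G : Type u} [Group G]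

lemma act_inv_eq' (T : GTree G) {g : G} {a b : T.V} (h : T.act g a = b) : T.act g⁻¹ b = a := by
  subst h
  rw [← Equiv.Perm.mul_apply, ← map_mul, inv_mul_cancel, map_one, Equiv.Perm.one_apply]

lemma act_mul' (T : GTree G) (g h : G) (v : T.V) :
    T.act (g * h) v = T.act g (T.act h v) := by
  rw [map_mul, Equiv.Perm.mul_apply]

lemma exists_equivariant_map (T T' : GTree G) (hsame : SameDef T T') :
    ∃ f : T.V → T'.V, (∀ (g : G) (v : T.V), f (T.act g v) = T'.act g (f v)) ∧
      (∀ (v : T.V) (g : G), T.act g v = v → T'.act g (f v) = f v) := by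
  classical
  let s : Setoid T.V :=
    ⟨fun a b => ∃ g : G, T.act g a = b,
     ⟨fun a => ⟨1, by simp⟩,
      fun {a b} h => by
        obtain ⟨g, hg⟩ := h
        exact ⟨g⁻¹, T.act_inv_eq' hg⟩,
      fun {a b c} h h' => by
        obtain ⟨g, hg⟩ := h
        obtain ⟨g', hg'⟩ := h'
        exact ⟨g' * g, by rw [T.act_mul', hg, hg']⟩⟩⟩
  let rep : T.V → T.V := fun v => (Quotient.mk s v).out
  have hrep : ∀ v : T.V, ∃ g : G, T.act g (rep v) = v := fun v => Quotient.mk_out (s := s) v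
  have hfx : ∀ w : T.V, ∃ x : T'.V, ∀ h : G, T.act h w = w → T'.act h x = x := by
    intro w
    obtain ⟨x, hx⟩ := (hsame (T.stab w)).mp ⟨w, fun h hh => hh⟩
    exact ⟨x, fun h hh => hx h hh⟩
  let p : T.V → T'.V := fun w => (hfx w).choose
  have hp : ∀ (w : T.V) (h : G), T.act h w = w → T'.act h (p w) = p w := fun w => (hfx w).choose_spec
  let f : T.V → T'.V := fun v => T'.act (hrep v).choose (p (rep v))
  have key : ∀ (v : T.V) (g : G), T.act g (rep v) = v → f v = T'.act g (p (rep v)) := by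
    intro v g hg
    have h0 := (hrep v).choose_spec
    have hfix : T.act (g⁻¹ * (hrep v).choose) (rep v) = rep v := by
      rw [T.act_mul', h0]
      exact T.act_inv_eq' hg
    have hpp := hp (rep v) _ hfix
    calc f v = T'.act (hrep v).choose (p (rep v)) := rfl
      _ = T'.act (g * (g⁻¹ * (hrep v).choose)) (p (rep v)) := by rw [mul_inv_cancel_left]
      _ = T'.act g (T'.act (g⁻¹ * (hrep v).choose) (p (rep v))) := T'.act_mul' _ _ _
      _ = T'.act g (p (rep v)) := by rw [hpp]
  have hrepeq : ∀ (g : G) (v : T.V), rep (T.act g v) = rep v := by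
    intro g v
    have : (Quotient.mk s (T.act g v)) = Quotient.mk s v :=
      Quotient.sound ⟨g⁻¹, T.act_inv_eq' rfl⟩
    simp only [rep, this]
  have hequiv : ∀ (g : G) (v : T.V), f (T.act g v) = T'.act g (f v) := by
    intro g v
    have h1 : T.act (g * (hrep v).choose) (rep (T.act g v)) = T.act g v := by
      rw [hrepeq, T.act_mul', (hrep v).choose_spec]
    have h2 := key (T.act g v) _ h1
    rw [h2, hrepeq, T'.act_mul']
  refine ⟨f, hequiv, ?_⟩
  intro v g hg
  conv_rhs => rw [← hg]
  rw [hequiv]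

end GTree
open SimpleGraph
namespace GTree
variable {G : Type u} [Group G]

lemma act_inv_eq2 (T : GTree G) {g : G} {a b : T.V} (h : T.act g a = b) : T.act g⁻¹ b = a := by
  subst h
  rw [← Equiv.Perm.mul_apply, ← map_mul, inv_mul_cancel, map_one, Equiv.Perm.one_apply]

lemma act_mul2 (T : GTree G) (g h : G) (v : T.V) :
    T.act (g * h) v = T.act g (T.act h v) := by
  rw [map_mul, Equiv.Perm.mul_apply]

lemma dartAct_toProd (T : GTree G) (g : G) (d : T.graph.Dart) :
    (T.dartAct g d).toProd = (T.act g d.toProd.1, T.act g d.toProd.2) := rfl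

lemma dartAct_one (T : GTree G) (d : T.graph.Dart) : T.dartAct 1 d = d := by
  apply Dart.ext
  rw [dartAct_toProd]
  simp

lemma dartAct_mul (T : GTree G) (g h : G) (d : T.graph.Dart) :
    T.dartAct (g * h) d = T.dartAct g (T.dartAct h d) := by
  apply Dart.ext
  simp [dartAct_toProd, T.act_mul2]

lemma dartAct_symm (T : GTree G) (g : G) (d : T.graph.Dart) :
    T.dartAct g d.symm = (T.dartAct g d).symm := by
  apply Dart.ext
  simp [dartAct_toProd, Dart.symm, Prod.swap]

lemma dartAct_inv (T : GTree G) {g : G} {d d' : T.graph.Dart} (h : T.dartAct g d = d') :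
    T.dartAct g⁻¹ d' = d := by
  rw [← h, ← dartAct_mul, inv_mul_cancel, dartAct_one]

lemma dartAct_ne_symm (T : GTree G) (g : G) (d : T.graph.Dart) :
    T.dartAct g d ≠ d.symm := by
  intro h
  have h1 : T.act g d.toProd.1 = d.toProd.2 := by
    have := congrArg (fun x => x.toProd.1) h
    simpa [dartAct_toProd, Dart.symm, Prod.swap] using this
  have h2 : T.act g d.toProd.2 = d.toProd.1 := by
    have := congrArg (fun x => x.toProd.2) h
    simpa [dartAct_toProd, Dart.symm, Prod.swap] using this
  exact T.noInversion g d.toProd.1 d.toProd.2 d.adj ⟨h1, h2⟩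

lemma dart_fix_of_dartAct_eq (T : GTree G) {g : G} {d : T.graph.Dart}
    (h : T.dartAct g d = d) : T.act g d.toProd.1 = d.toProd.1 ∧ T.act g d.toProd.2 = d.toProd.2 := by
  constructor
  · exact congrArg (fun x => x.toProd.1) h
  · exact congrArg (fun x => x.toProd.2) h

lemma exists_AB (T T' : GTree G)
    (hES : ∀ u v : T.V, T.graph.Adj u v →
      ∃ a b : T'.V, T'.graph.Adj a b ∧ T.edgeStab u v ≤ T'.edgeStab a b) :
    ∃ A B : T.graph.Dart → T'.V,
      (∀ d, T'.graph.Adj (A d) (B d)) ∧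
      (∀ d : T.graph.Dart, A d.symm = A d ∧ B d.symm = B d) ∧
      (∀ (g : G) (d : T.graph.Dart),
        A (T.dartAct g d) = T'.act g (A d) ∧ B (T.dartAct g d) = T'.act g (B d)) := by
  classical
  let s : Setoid T.graph.Dart :=
    ⟨fun d d' => ∃ g : G, T.dartAct g d = d' ∨ T.dartAct g d = d'.symm,
     ⟨fun d => ⟨1, Or.inl (T.dartAct_one d)⟩,
      fun {d d'} h => by
        obtain ⟨g, hg | hg⟩ := h
        · exact ⟨g⁻¹, Or.inl (T.dartAct_inv hg)⟩
        · refine ⟨g⁻¹, Or.inr ?_⟩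
          have e1 := T.dartAct_inv hg
          have e2 := congrArg Dart.symm e1
          rw [← T.dartAct_symm, Dart.symm_symm] at e2
          exact e2
      ,
      fun {d d' d''} h h' => by
        obtain ⟨g, hg | hg⟩ := h
        · obtain ⟨g', hg' | hg'⟩ := h'
          · exact ⟨g' * g, Or.inl (by rw [T.dartAct_mul, hg, hg'])⟩
          · exact ⟨g' * g, Or.inr (by rw [T.dartAct_mul, hg, hg'])⟩
        · obtain ⟨g', hg' | hg'⟩ := h'
          · exact ⟨g' * g, Or.inr (by rw [T.dartAct_mul, hg, T.dartAct_symm, hg'])⟩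
          · exact ⟨g' * g, Or.inl (by
              rw [T.dartAct_mul, hg, T.dartAct_symm, hg', Dart.symm_symm])⟩⟩⟩
  let rep : T.graph.Dart → T.graph.Dart := fun d => (Quotient.mk s d).out
  have hrep : ∀ d, ∃ g : G, T.dartAct g (rep d) = d ∨ T.dartAct g (rep d) = d.symm :=
    fun d => Quotient.mk_out (s := s) d
  -- choice of edge in T' for each representative
  have hab : ∀ r : T.graph.Dart, ∃ ab : T'.V × T'.V, T'.graph.Adj ab.1 ab.2 ∧
      ∀ g : G, T.dartAct g r = r → (T'.act g ab.1 = ab.1 ∧ T'.act g ab.2 = ab.2) := by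
    intro r
    obtain ⟨a, b, hadj, hle⟩ := hES r.toProd.1 r.toProd.2 r.adj
    refine ⟨(a, b), hadj, ?_⟩
    intro g hg
    obtain ⟨h1, h2⟩ := T.dart_fix_of_dartAct_eq hg
    have hmem : g ∈ T.edgeStab r.toProd.1 r.toProd.2 := (T.mem_edgeStab).mpr ⟨h1, h2⟩
    exact (T'.mem_edgeStab).mp (hle hmem)
  let ab : T.graph.Dart → T'.V × T'.V := fun r => (hab r).choose
  have hab_adj : ∀ r, T'.graph.Adj (ab r).1 (ab r).2 := fun r => (hab r).choose_spec.1
  have hab_fix : ∀ (r : T.graph.Dart) (g : G), T.dartAct g r = r →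
      (T'.act g (ab r).1 = (ab r).1 ∧ T'.act g (ab r).2 = (ab r).2) :=
    fun r => (hab r).choose_spec.2
  let A : T.graph.Dart → T'.V := fun d => T'.act (hrep d).choose (ab (rep d)).1
  let B : T.graph.Dart → T'.V := fun d => T'.act (hrep d).choose (ab (rep d)).2
  have key : ∀ (d : T.graph.Dart) (g : G),
      (T.dartAct g (rep d) = d ∨ T.dartAct g (rep d) = d.symm) →
      A d = T'.act g (ab (rep d)).1 ∧ B d = T'.act g (ab (rep d)).2 := by
    intro d g hg
    have h0 := (hrep d).choose_spec
    have hfix : T.dartAct (g⁻¹ * (hrep d).choose) (rep d) = rep d := by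
      rcases h0 with h0 | h0 <;> rcases hg with hg | hg
      · rw [T.dartAct_mul, h0, T.dartAct_inv hg]
      · exfalso
        have e1 := T.dartAct_inv hg
        have e2 := congrArg Dart.symm e1
        rw [← T.dartAct_symm, Dart.symm_symm] at e2
        have h3 : T.dartAct (g⁻¹ * (hrep d).choose) (rep d) = (rep d).symm := by
          rw [T.dartAct_mul, h0]
          exact e2
        exact T.dartAct_ne_symm _ _ h3
      · exfalso
        have h3 : T.dartAct (g⁻¹ * (hrep d).choose) (rep d) = (rep d).symm := by
          rw [T.dartAct_mul, h0, T.dartAct_symm, T.dartAct_inv hg]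
        exact T.dartAct_ne_symm _ _ h3
      · rw [T.dartAct_mul, h0]
        exact T.dartAct_inv hg
    obtain ⟨hfa, hfb⟩ := hab_fix (rep d) _ hfix
    constructor
    · calc A d = T'.act (hrep d).choose (ab (rep d)).1 := rfl
        _ = T'.act (g * (g⁻¹ * (hrep d).choose)) (ab (rep d)).1 := by rw [mul_inv_cancel_left]
        _ = T'.act g (T'.act (g⁻¹ * (hrep d).choose) (ab (rep d)).1) := T'.act_mul2 _ _ _
        _ = T'.act g (ab (rep d)).1 := by rw [hfa]
    · calc B d = T'.act (hrep d).choose (ab (rep d)).2 := rfl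
        _ = T'.act (g * (g⁻¹ * (hrep d).choose)) (ab (rep d)).2 := by rw [mul_inv_cancel_left]
        _ = T'.act g (T'.act (g⁻¹ * (hrep d).choose) (ab (rep d)).2) := T'.act_mul2 _ _ _
        _ = T'.act g (ab (rep d)).2 := by rw [hfb]
  have hrep_symm : ∀ d : T.graph.Dart, rep d.symm = rep d := by
    intro d
    have : (Quotient.mk s d.symm) = Quotient.mk s d :=
      Quotient.sound ⟨1, Or.inr (by rw [T.dartAct_one])⟩
    simp only [rep, this]
  have hrep_act : ∀ (g : G) (d : T.graph.Dart), rep (T.dartAct g d) = rep d := by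
    intro g d
    have : (Quotient.mk s (T.dartAct g d)) = Quotient.mk s d :=
      Quotient.sound ⟨g⁻¹, Or.inl (T.dartAct_inv rfl)⟩
    simp only [rep, this]
  refine ⟨A, B, ?_, ?_, ?_⟩
  · intro d
    exact T'.adj_act _ _ _ (hab_adj (rep d))
  · intro d
    have h0 := (hrep d).choose_spec
    have h1 : T.dartAct (hrep d).choose (rep d.symm) = d.symm ∨
        T.dartAct (hrep d).choose (rep d.symm) = (d.symm).symm := by
      rw [hrep_symm, Dart.symm_symm]
      exact h0.symm
    have h2 := key d.symm ((hrep d).choose) h1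
    have h3 := key d ((hrep d).choose) h0
    rw [hrep_symm] at h2
    exact ⟨h2.1.trans h3.1.symm, h2.2.trans h3.2.symm⟩
  · intro g d
    have h0 := (hrep d).choose_spec
    have h1 : T.dartAct (g * (hrep d).choose) (rep (T.dartAct g d)) = T.dartAct g d ∨
        T.dartAct (g * (hrep d).choose) (rep (T.dartAct g d)) = (T.dartAct g d).symm := by
      rw [hrep_act, T.dartAct_mul]
      rcases h0 with h0 | h0
      · left; rw [h0]
      · right; rw [h0, T.dartAct_symm]
    have h2 := key (T.dartAct g d) _ h1
    have h3 := key d _ h0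
    rw [hrep_act] at h2
    constructor
    · rw [h2.1, T'.act_mul2, ← h3.1]
    · rw [h2.2, T'.act_mul2, ← h3.2]

end GTree
open SimpleGraph
namespace GTree
variable {G : Type u} [Group G]

lemma morphism_of_ES (T T' : GTree G) (hsame : SameDef T T')
    (hES : ∀ u v : T.V, T.graph.Adj u v →
      ∃ a b : T'.V, T'.graph.Adj a b ∧ T.edgeStab u v ≤ T'.edgeStab a b) :
    Nonempty (GMorphism T T') := by
  obtain ⟨f, hfe, hffix⟩ := exists_equivariant_map T T' hsame
  obtain ⟨A, B, hAB, hsym, hact⟩ := exists_AB T T' hES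
  let wk : ∀ (u v : T.V), T.graph.Adj u v → T'.graph.Walk (f u) (f v) := fun u v h =>
    (T'.geo (f u) (A ⟨(u,v), h⟩)).append
      (Walk.cons (hAB ⟨(u,v), h⟩) (Walk.cons (hAB ⟨(u,v), h⟩).symm (T'.geo (A ⟨(u,v), h⟩) (f v))))
  have hsupp : ∀ (u v : T.V) (h : T.graph.Adj u v), (wk u v h).support =
      (T'.geo (f u) (A ⟨(u,v),h⟩)).support
        ++ (B ⟨(u,v),h⟩ :: (T'.geo (A ⟨(u,v),h⟩) (f v)).support) := by
    intro u v h
    show ((T'.geo (f u) (A ⟨(u,v), h⟩)).append _).support = _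
    rw [Walk.support_append, Walk.support_cons, Walk.support_cons, List.tail_cons]
  refine ⟨⟨f, hfe, wk, ?_, ?_, ?_⟩⟩
  · intro u v h
    rw [Walk.not_nil_iff_lt_length]
    show 0 < ((T'.geo (f u) (A ⟨(u,v), h⟩)).append _).length
    rw [Walk.length_append, Walk.length_cons]
    omega
  · intro u v h
    have hd : (⟨(v,u), h.symm⟩ : T.graph.Dart) = (⟨(u,v), h⟩ : T.graph.Dart).symm := by
      apply Dart.ext
      rfl
    have hA : A ⟨(v,u), h.symm⟩ = A ⟨(u,v), h⟩ := by rw [hd]; exact (hsym _).1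
    have hB : B ⟨(v,u), h.symm⟩ = B ⟨(u,v), h⟩ := by rw [hd]; exact (hsym _).2
    rw [hsupp, hsupp, hA, hB]
    have r1 : (T'.geo (f v) (A ⟨(u,v), h⟩)).support
        = ((T'.geo (A ⟨(u,v), h⟩) (f v)).support).reverse := by
      rw [← Walk.support_reverse, T'.geo_reverse]
    have r2 : (T'.geo (A ⟨(u,v), h⟩) (f u)).support
        = ((T'.geo (f u) (A ⟨(u,v), h⟩)).support).reverse := by
      rw [← Walk.support_reverse, T'.geo_reverse]
    rw [r1, r2, List.reverse_append, List.reverse_cons, List.append_assoc]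
    simp
  · intro g u v h
    have hd : (⟨(T.act g u, T.act g v), T.adj_act g u v h⟩ : T.graph.Dart)
        = T.dartAct g ⟨(u,v), h⟩ := by
      apply Dart.ext
      rfl
    have hA : A ⟨(T.act g u, T.act g v), T.adj_act g u v h⟩ = T'.act g (A ⟨(u,v), h⟩) := by
      rw [hd]; exact (hact g _).1
    have hB : B ⟨(T.act g u, T.act g v), T.adj_act g u v h⟩ = T'.act g (B ⟨(u,v), h⟩) := by
      rw [hd]; exact (hact g _).2
    rw [hsupp, hsupp, hA, hB, hfe, hfe, support_geo_act, support_geo_act, List.map_append,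
      List.map_cons]

lemma ES_of_morphism (T T' : GTree G) (m : GMorphism T T') :
    ∀ u v : T.V, T.graph.Adj u v →
      ∃ a b : T'.V, T'.graph.Adj a b ∧ T.edgeStab u v ≤ T'.edgeStab a b := by
  intro u v h
  obtain ⟨b, hadj, q, hq⟩ := Walk.not_nil_iff.mp (m.edgeWalk_ne_nil u v h)
  refine ⟨m.f u, b, hadj, ?_⟩
  intro g hg
  obtain ⟨hgu, hgv⟩ := (T.mem_edgeStab).mp hg
  have hw := m.edgeWalk_equivariant g u v h
  have hcast : (m.edgeWalk (T.act g u) (T.act g v) (T.adj_act g u v h)).support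
      = (m.edgeWalk u v h).support := by
    have haux : ∀ (u' v' : T.V) (h' : T.graph.Adj u' v') (e1 : u' = u) (e2 : v' = v),
        (m.edgeWalk u' v' h').support = (m.edgeWalk u v h).support := by
      intro u' v' h' e1 e2
      subst e1; subst e2
      rfl
    exact haux _ _ _ hgu hgv
  have hfix := list_map_fix (fun x => T'.act g x) (m.edgeWalk u v h).support
    (by rw [← hw, hcast])
  refine (T'.mem_edgeStab).mpr ⟨hfix _ (Walk.start_mem_support _), hfix _ ?_⟩
  rw [hq, Walk.support_cons]
  exact List.mem_cons_of_mem _ (Walk.start_mem_support q)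

lemma biElliptic_iff (T : GTree G) (H : Subgroup G) :
    BiElliptic T H ↔ ∃ a b : T.V, T.graph.Adj a b ∧ H ≤ T.edgeStab a b := by
  constructor
  · rintro ⟨x, y, hne, hfix⟩
    obtain ⟨b, hadj, q, hq⟩ := Walk.not_nil_iff.mp
      (Walk.not_nil_of_ne (p := T.geo x y) hne)
    have hbmem : b ∈ (T.geo x y).support := by
      rw [hq, Walk.support_cons]
      exact List.mem_cons_of_mem _ (Walk.start_mem_support q)
    refine ⟨x, b, hadj, fun h hh => (T.mem_edgeStab).mpr ⟨(hfix h hh).1, ?_⟩⟩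
    exact T.act_fix_geo (hfix h hh).1 (hfix h hh).2 b hbmem
  · rintro ⟨a, b, hadj, hle⟩
    exact ⟨a, b, hadj.ne, fun h hh => (T.mem_edgeStab).mp (hle hh)⟩

end GTree
open SimpleGraph
namespace GTree
variable {G : Type u} [Group G]

lemma isPath_loop (T : GTree G) {w : T.V} (p : T.graph.Walk w w) (hp : p.IsPath) :
    p = Walk.nil := by
  cases p with
  | nil => rfl
  | cons h q =>
    rw [Walk.cons_isPath_iff] at hp
    exact absurd (Walk.end_mem_support q) hp.2

lemma nontrivial_of_adj (T T' : GTree G) (hsame : SameDef T T') {u v : T.V}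
    (huv : T.graph.Adj u v) : ∃ a b : T'.V, a ≠ b := by
  by_contra hno
  push_neg at hno
  obtain ⟨p'⟩ := T'.nonempty
  have hell : T'.Elliptic ⊤ := ⟨p', fun h _ => hno _ _⟩
  obtain ⟨w, hw⟩ := (hsame ⊤).mpr hell
  have hS : ({w} : Set T.V) = Set.univ := by
    apply T.minimal
    · exact ⟨w, rfl⟩
    · intro g x hx
      rw [Set.mem_singleton_iff] at hx
      subst hx
      exact hw g (Subgroup.mem_top g)
    · intro a ha b hb p hp x hx
      rw [Set.mem_singleton_iff] at ha hb
      subst ha; subst hb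
      rw [T.isPath_loop p hp, Walk.support_nil] at hx
      rw [Set.mem_singleton_iff]
      exact List.mem_singleton.mp hx
  have hu : u ∈ ({w} : Set T.V) := by rw [hS]; trivial
  have hv : v ∈ ({w} : Set T.V) := by rw [hS]; trivial
  rw [Set.mem_singleton_iff] at hu hv
  exact huv.ne (hu.trans hv.symm)

lemma geo_support_adj (T : GTree G) {x y : T.V} (v : T.V) (h : T.graph.Adj x y) :
    (T.geo x v).support ⊆ x :: (T.geo y v).support := by
  by_cases hx : x ∈ (T.geo y v).support
  · intro w hw
    rw [← T.geo_eq ((T.geo y v).dropUntil x hx) ((T.geo_isPath y v).dropUntil hx)] at hw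
    exact List.mem_cons_of_mem _ (Walk.support_dropUntil_subset _ hx hw)
  · have hcons : Walk.cons h (T.geo y v) = T.geo x v :=
      T.geo_eq _ (by rw [Walk.cons_isPath_iff]; exact ⟨T.geo_isPath y v, hx⟩)
    rw [← hcons, Walk.support_cons]
    exact fun a ha => ha

lemma side_step (T : GTree G) {u v : T.V} (huv : T.graph.Adj u v) {x y : T.V}
    (hxy : T.graph.Adj x y) (hx : u ∈ (T.geo x v).support) (hy : u ∉ (T.geo y v).support) :
    x = u ∧ y = v := by
  have hxu : x = u := by
    rcases List.mem_cons.mp (T.geo_support_adj v hxy hx) with h | h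
    · exact h.symm
    · exact absurd h hy
  subst hxu
  have h1 : Walk.cons hxy (T.geo y v) = T.geo x v :=
    T.geo_eq _ (by rw [Walk.cons_isPath_iff]; exact ⟨T.geo_isPath y v, hy⟩)
  have h2 : Walk.cons huv Walk.nil = T.geo x v :=
    T.geo_eq _ (by simp [Walk.cons_isPath_iff, huv.ne])
  have hss := congrArg Walk.support (h1.trans h2.symm)
  rw [Walk.support_cons, Walk.support_cons, Walk.support_nil] at hss
  have hts : (T.geo y v).support = [v] := by
    injection hss
  have hy2 : y ∈ (T.geo y v).support := Walk.start_mem_support _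
  rw [hts] at hy2
  exact ⟨rfl, List.mem_singleton.mp hy2⟩

lemma walk_sides (T : GTree G) {u v : T.V} (huv : T.graph.Adj u v) :
    ∀ {x y : T.V} (W : T.graph.Walk x y),
      (∀ w ∈ W.support, u ∈ (T.geo w v).support) ∨
      (∀ w ∈ W.support, u ∉ (T.geo w v).support) ∨
      (u ∈ W.support ∧ v ∈ W.support) := by
  intro x y W
  induction W with
  | @nil x' =>
    by_cases h : u ∈ (T.geo x' v).support
    · left
      intro w hw
      rw [Walk.support_nil, List.mem_singleton] at hw
      rwa [hw]
    · right; left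
      intro w hw
      rw [Walk.support_nil, List.mem_singleton] at hw
      rwa [hw]
  | @cons x z y hadj q ih =>
    rcases ih with h1 | h2 | h3
    · by_cases hx : u ∈ (T.geo x v).support
      · left
        intro w hw
        rw [Walk.support_cons] at hw
        rcases List.mem_cons.mp hw with rfl | hw
        · exact hx
        · exact h1 w hw
      · have hz := h1 _ (Walk.start_mem_support q)
        obtain ⟨hzu, hxv⟩ := T.side_step huv hadj.symm hz hx
        right; right
        constructor
        · rw [Walk.support_cons]
          exact List.mem_cons_of_mem _ (hzu ▸ Walk.start_mem_support q)
        · rw [Walk.support_cons]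
          exact hxv ▸ List.mem_cons_self
    · by_cases hx : u ∈ (T.geo x v).support
      · have hz := h2 _ (Walk.start_mem_support q)
        obtain ⟨hxu, hzv⟩ := T.side_step huv hadj hx hz
        right; right
        constructor
        · rw [Walk.support_cons]
          exact hxu ▸ List.mem_cons_self
        · rw [Walk.support_cons]
          exact List.mem_cons_of_mem _ (hzv ▸ Walk.start_mem_support q)
      · right; left
        intro w hw
        rw [Walk.support_cons] at hw
        rcases List.mem_cons.mp hw with rfl | hw
        · exact hx
        · exact h2 w hw
    · right; right
      rw [Walk.support_cons]
      exact ⟨List.mem_cons_of_mem _ h3.1, List.mem_cons_of_mem _ h3.2⟩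

lemma side_total (T : GTree G) {u v : T.V} (h : T.graph.Adj u v) (w : T.V) :
    v ∈ (T.geo u w).support ∨ u ∈ (T.geo v w).support := by
  by_cases hv : v ∈ (T.geo u w).support
  · exact Or.inl hv
  · right
    have hcons : Walk.cons h.symm (T.geo u w) = T.geo v w :=
      T.geo_eq _ (by rw [Walk.cons_isPath_iff]; exact ⟨T.geo_isPath u w, hv⟩)
    rw [← hcons, Walk.support_cons]
    exact List.mem_cons_of_mem _ (Walk.start_mem_support _)

lemma exists_small (T T' : GTree G) (hsame : SameDef T T') :
    ∀ u v : T.V, T.graph.Adj u v →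
      ∃ a b : T'.V, T'.graph.Adj a b ∧ T'.edgeStab a b ≤ T.edgeStab u v := by
  intro u v huv
  obtain ⟨f, hfe, hffix⟩ := exists_equivariant_map T' T (fun H => (hsame H).symm)
  obtain ⟨a0, b0, hne0⟩ := nontrivial_of_adj T T' hsame huv
  have hpart : ∀ x : T'.V, ∃ z : T'.V, z ≠ x := by
    intro x
    by_cases hx : x = a0
    · exact ⟨b0, by rw [hx]; exact fun hc => hne0 hc.symm⟩
    · exact ⟨a0, fun hc => hx hc.symm⟩
  set S : Set T.V :=
    {w | ∃ (a b : T'.V) (_ : T'.graph.Adj a b), w ∈ (T.geo (f a) (f b)).support} with hSdef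
  have hfS : ∀ x : T'.V, f x ∈ S := by
    intro x
    obtain ⟨z, hz⟩ := hpart x
    obtain ⟨b, hadj, q, hq⟩ := Walk.not_nil_iff.mp
      (Walk.not_nil_of_ne (p := T'.geo x z) (fun hc => hz hc.symm))
    exact ⟨x, b, hadj, Walk.start_mem_support _⟩
  have htrans : ∀ {x y : T'.V} (W : T'.graph.Walk x y),
      ∃ Wt : T.graph.Walk (f x) (f y), ∀ w ∈ Wt.support, w ∈ S := by
    intro x y W
    induction W with
    | nil =>
      refine ⟨Walk.nil, ?_⟩
      intro w hw
      rw [Walk.support_nil, List.mem_singleton] at hw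
      rw [hw]
      exact hfS _
    | @cons x z y hadj q ih =>
      obtain ⟨Wt, hWt⟩ := ih
      refine ⟨(T.geo (f x) (f z)).append Wt, ?_⟩
      intro w hw
      rcases (Walk.mem_support_append_iff _ _).mp hw with hw | hw
      · exact ⟨x, z, hadj, hw⟩
      · exact hWt w hw
  have hSuniv : S = Set.univ := by
    apply T.minimal
    · exact ⟨f a0, hfS a0⟩
    · rintro g w ⟨a, b, hab, hmem⟩
      refine ⟨T'.act g a, T'.act g b, T'.adj_act g a b hab, ?_⟩
      rw [hfe, hfe, support_geo_act]
      exact List.mem_map_of_mem hmem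
    · rintro w1 ⟨a1, b1, hab1, hm1⟩ w2 ⟨a2, b2, hab2, hm2⟩ p hp x hx
      obtain ⟨W2, hW2⟩ := htrans (T'.geo b1 a2)
      set W : T.graph.Walk w1 w2 :=
        ((T.geo (f a1) (f b1)).dropUntil w1 hm1).append
          (W2.append ((T.geo (f a2) (f b2)).takeUntil w2 hm2)) with hWdef
      have hWS : ∀ w ∈ W.support, w ∈ S := by
        intro w hw
        rcases (Walk.mem_support_append_iff _ _).mp hw with hw | hw
        · exact ⟨a1, b1, hab1, Walk.support_dropUntil_subset _ hm1 hw⟩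
        · rcases (Walk.mem_support_append_iff _ _).mp hw with hw | hw
          · exact hW2 w hw
          · exact ⟨a2, b2, hab2, Walk.support_takeUntil_subset _ hm2 hw⟩
      have hpW : p = W.bypass :=
        (T.geo_eq p hp).trans (T.geo_eq W.bypass (Walk.bypass_isPath W)).symm
      exact hWS x (Walk.support_bypass_subset W (hpW ▸ hx))
  have hclaim : ∃ (a b : T'.V) (_ : T'.graph.Adj a b),
      u ∈ (T.geo (f a) (f b)).support ∧ v ∈ (T.geo (f a) (f b)).support := by
    by_contra hno
    push_neg at hno
    have hone : ∀ (a b : T'.V), T'.graph.Adj a b →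
        (∀ w ∈ (T.geo (f a) (f b)).support, u ∈ (T.geo w v).support) ∨
        (∀ w ∈ (T.geo (f a) (f b)).support, u ∉ (T.geo w v).support) := by
      intro a b hab
      rcases T.walk_sides huv (T.geo (f a) (f b)) with h | h | h
      · exact Or.inl h
      · exact Or.inr h
      · exact absurd h.2 (hno a b hab h.1)
    have hconn : ∀ {x y : T'.V} (W : T'.graph.Walk x y),
        (u ∈ (T.geo (f x) v).support ↔ u ∈ (T.geo (f y) v).support) := by
      intro x y W
      induction W with
      | nil => exact Iff.rfl
      | @cons x z y hadj q ih =>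
        refine Iff.trans ?_ ih
        rcases hone _ _ hadj with h | h
        · exact iff_of_true (h _ (Walk.start_mem_support _)) (h _ (Walk.end_mem_support _))
        · exact iff_of_false (h _ (Walk.start_mem_support _)) (h _ (Walk.end_mem_support _))
    have hu : u ∈ S := by rw [hSuniv]; trivial
    have hv : v ∈ S := by rw [hSuniv]; trivial
    obtain ⟨a1, b1, hab1, hm1⟩ := hu
    obtain ⟨a2, b2, hab2, hm2⟩ := hv
    have hA1 : u ∈ (T.geo (f a1) v).support := by
      rcases hone _ _ hab1 with h | h
      · exact h _ (Walk.start_mem_support _)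
      · exact absurd (Walk.start_mem_support (T.geo u v)) (h u hm1)
    have hA2 : u ∉ (T.geo (f a2) v).support := by
      rcases hone _ _ hab2 with h | h
      · exfalso
        have hvA : u ∈ (T.geo v v).support := h v hm2
        rw [T.geo_nil, Walk.support_nil] at hvA
        exact huv.ne (List.mem_singleton.mp hvA)
      · exact h _ (Walk.start_mem_support _)
    exact hA2 ((hconn ((T'.isTree.isConnected.preconnected a1 a2).some)).mp hA1)
  obtain ⟨a, b, hab, hmu, hmv⟩ := hclaim
  refine ⟨a, b, hab, ?_⟩
  intro g hg
  obtain ⟨hga, hgb⟩ := (T'.mem_edgeStab).mp hg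
  have hfa : T.act g (f a) = f a := by rw [← hfe, hga]
  have hfb : T.act g (f b) = f b := by rw [← hfe, hgb]
  have hfixall := T.act_fix_geo hfa hfb
  exact (T.mem_edgeStab).mpr ⟨hfixall u hmu, hfixall v hmv⟩

end GTree
open SimpleGraph
namespace GTree
variable {G : Type u} [Group G]

lemma geo_length_adj (T : GTree G) {x y : T.V} (h : T.graph.Adj x y) (v : T.V) :
    (T.geo x v).length = (T.geo y v).length + 1 ∨
    (T.geo y v).length = (T.geo x v).length + 1 := by
  by_cases hy : y ∈ (T.geo x v).support
  · left
    have hsplit := Walk.take_spec (T.geo x v) hy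
    have h1 : (T.geo x v).takeUntil y hy = Walk.cons h Walk.nil :=
      (T.geo_eq _ ((T.geo_isPath x v).takeUntil hy)).trans
        (T.geo_eq (Walk.cons h Walk.nil) (by simp [Walk.cons_isPath_iff, h.ne])).symm
    have h2 : (T.geo x v).dropUntil y hy = T.geo y v :=
      T.geo_eq _ ((T.geo_isPath x v).dropUntil hy)
    have hlen := congrArg Walk.length hsplit
    rw [Walk.length_append, h1, h2] at hlen
    simp only [Walk.length_cons, Walk.length_nil] at hlen
    omega
  · right
    have hcons : Walk.cons h.symm (T.geo x v) = T.geo y v :=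
      T.geo_eq _ (by rw [Walk.cons_isPath_iff]; exact ⟨T.geo_isPath x v, hy⟩)
    rw [← hcons, Walk.length_cons]

lemma walk_parity (T : GTree G) (v : T.V) : ∀ {x y : T.V} (W : T.graph.Walk x y),
    (W.length + (T.geo x v).length + (T.geo y v).length) % 2 = 0 := by
  intro x y W
  induction W with
  | @nil x' => simp only [Walk.length_nil]; omega
  | @cons x z y hadj q ih =>
    rcases T.geo_length_adj hadj v with h | h
    · rw [Walk.length_cons]
      omega
    · rw [Walk.length_cons]
      omega

lemma no_adj_elliptic (T : GTree G) {g : G} {t x : T.V} (ht : T.act g t = t)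
    (hadj : T.graph.Adj x (T.act g x)) : False := by
  set p := T.geo x t with hp
  let W : T.graph.Walk x (T.act g x) :=
    p.append ((p.map (T.actHom g)).copy rfl ht).reverse
  have h1 := T.walk_parity (T.act g x) W
  have hWlen : W.length = p.length + p.length := by
    show (p.append _).length = _
    exact (Walk.length_append p _).trans (congrArg (p.length + ·) ((Walk.length_reverse _).trans ((Walk.length_copy (Walk.map (T.actHom g) p) rfl ht).trans (Walk.length_map _ _))))
  have h2 : (T.geo x (T.act g x)).length = 1 := by
    rw [T.geo_adj hadj, Walk.length_cons, Walk.length_nil]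
  have h3 : (T.geo (T.act g x) (T.act g x)).length = 0 := by
    rw [T.geo_nil, Walk.length_nil]
  rw [hWlen, h2, h3] at h1
  omega

lemma aux_red (T T' : GTree G) (hsame : SameDef T T') (hred : T.Reduced)
    {u v : T.V} (hadj : T.graph.Adj v u) (hvu : T.stab v ≤ T.stab u) (x : T'.V)
    (hx : ∀ h ∈ T.stab v, T'.act h x = x)
    (huniq : ∀ y : T'.V, (∀ h ∈ T.stab v, T'.act h y = y) → y = x) : False := by
  obtain ⟨g0, hg0⟩ := hred v u hadj hvu
  -- stab u fixes x
  have hux : ∀ h ∈ T.stab u, T'.act h x = x := by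
    obtain ⟨y, hy⟩ := (hsame (T.stab u)).mp ⟨u, fun h hh => hh⟩
    have hyx : y = x := huniq y (fun h hh => hy h (hvu hh))
    rw [← hyx]
    exact hy
  -- g0 x = x
  have hg0x : T'.act g0 x = x := by
    apply huniq
    intro h hh
    have hconj : g0⁻¹ * h * g0 ∈ T.stab v := by
      rw [mem_stab, T.act_mul2, T.act_mul2, hg0]
      have : T.act h u = u := hvu hh
      rw [this]
      exact T.act_inv_eq2 hg0
    calc T'.act h (T'.act g0 x) = T'.act (h * g0) x := (T'.act_mul2 _ _ _).symm
      _ = T'.act (g0 * (g0⁻¹ * h * g0)) x := by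
          congr 1
          group
      _ = T'.act g0 (T'.act (g0⁻¹ * h * g0) x) := T'.act_mul2 _ _ _
      _ = T'.act g0 x := by rw [hx _ hconj]
  -- stab' x is elliptic in T
  obtain ⟨t, ht⟩ := (hsame (T'.stab x)).mpr ⟨x, fun h hh => hh⟩
  have hg0t : T.act g0 t = t := ht g0 ((T'.mem_stab).mpr hg0x)
  have hadj2 : T.graph.Adj v (T.act g0 v) := by rw [hg0]; exact hadj
  exact T.no_adj_elliptic hg0t hadj2

lemma reduced_ES (T T' : GTree G) (hsame : SameDef T T') (hred : T.Reduced) :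
    ∀ u v : T.V, T.graph.Adj u v →
      ∃ a b : T'.V, T'.graph.Adj a b ∧ T.edgeStab u v ≤ T'.edgeStab a b := by
  intro u v huv
  by_contra hno
  push_neg at hno
  -- H = edgeStab u v is elliptic in T', with unique fixed point
  obtain ⟨x, hx⟩ := (hsame (T.edgeStab u v)).mp
    ⟨u, fun h hh => ((T.mem_edgeStab).mp hh).1⟩
  have huniq : ∀ y : T'.V, (∀ h ∈ T.edgeStab u v, T'.act h y = y) → y = x := by
    intro y hy
    by_contra hne
    obtain ⟨b, hadj, q, hq⟩ := Walk.not_nil_iff.mp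
      (Walk.not_nil_of_ne (p := T'.geo x y) (fun hc => hne hc.symm))
    have hbmem : b ∈ (T'.geo x y).support := by
      rw [hq, Walk.support_cons]
      exact List.mem_cons_of_mem _ (Walk.start_mem_support q)
    refine hno x b hadj ?_
    intro h hh
    refine (T'.mem_edgeStab).mpr ⟨hx h hh, ?_⟩
    exact T'.act_fix_geo (hx h hh) (hy h hh) b hbmem
  -- stab u and stab v fix x
  have hUx : ∀ h ∈ T.stab u, T'.act h x = x := by
    obtain ⟨y, hy⟩ := (hsame (T.stab u)).mp ⟨u, fun h hh => hh⟩
    have hyx : y = x := huniq y (fun h hh => hy h ((T.mem_edgeStab).mp hh).1)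
    rw [← hyx]; exact hy
  have hVx : ∀ h ∈ T.stab v, T'.act h x = x := by
    obtain ⟨y, hy⟩ := (hsame (T.stab v)).mp ⟨v, fun h hh => hh⟩
    have hyx : y = x := huniq y (fun h hh => hy h ((T.mem_edgeStab).mp hh).2)
    rw [← hyx]; exact hy
  -- stab' x fixes a point w in T
  obtain ⟨w, hw⟩ := (hsame (T'.stab x)).mpr ⟨x, fun h hh => hh⟩
  have hUw : ∀ h ∈ T.stab u, T.act h w = w := fun h hh => hw h ((T'.mem_stab).mpr (hUx h hh))
  have hVw : ∀ h ∈ T.stab v, T.act h w = w := fun h hh => hw h ((T'.mem_stab).mpr (hVx h hh))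
  rcases T.side_total huv w with hside | hside
  · -- v on geo u w : stab u fixes v, i.e. stab u ≤ stab v
    have hle : T.stab u ≤ T.stab v := by
      intro h hh
      exact (T.mem_stab).mpr (T.act_fix_geo ((T.mem_stab).mp hh) (hUw h hh) v hside)
    refine T.aux_red T' hsame hred huv hle x hUx ?_
    intro y hy
    exact huniq y (fun h hh => hy h (((T.mem_edgeStab).mp hh).1 |> fun hfix => (T.mem_stab).mpr hfix))
  · have hle : T.stab v ≤ T.stab u := by
      intro h hh
      exact (T.mem_stab).mpr (T.act_fix_geo ((T.mem_stab).mp hh) (hVw h hh) u hside)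
    refine T.aux_red T' hsame hred huv.symm hle x hVx ?_
    intro y hy
    exact huniq y (fun h hh => hy h (((T.mem_edgeStab).mp hh).2 |> fun hfix => (T.mem_stab).mpr hfix))

end GTree

end Prop48Aux

/-- **Proposition (Guirardel–Levitt, Proposition 4.8).** For simplicial `G`-trees `T, T'`
in the same deformation space, the following are equivalent: (1) there are morphisms
`T → T'` and `T' → T`; (2) `T` and `T'` have the same generalized edge groups; (3) `T`
and `T'` have the same bi-elliptic groups.  These conditions hold when `T` and `T'` are
both reduced. -/
theorem statement_5 {G : Type u} [Group G] [Group.FG G] (T T' : GTree G)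
    (hsame : SameDef T T') :
    ((Nonempty (GMorphism T T') ∧ Nonempty (GMorphism T' T)) ↔
      (∀ H : Subgroup G, GenEdgeGroup T H ↔ GenEdgeGroup T' H)) ∧
    ((∀ H : Subgroup G, GenEdgeGroup T H ↔ GenEdgeGroup T' H) ↔
      (∀ H : Subgroup G, BiElliptic T H ↔ BiElliptic T' H)) ∧
    (T.Reduced → T'.Reduced →
      (Nonempty (GMorphism T T') ∧ Nonempty (GMorphism T' T))) := by
  have hsame' : SameDef T' T := fun H => (hsame H).symm
  have hES1 : (Nonempty (GMorphism T T') ∧ Nonempty (GMorphism T' T)) ↔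
      ((∀ u v : T.V, T.graph.Adj u v →
          ∃ a b : T'.V, T'.graph.Adj a b ∧ T.edgeStab u v ≤ T'.edgeStab a b) ∧
       (∀ u v : T'.V, T'.graph.Adj u v →
          ∃ a b : T.V, T.graph.Adj a b ∧ T'.edgeStab u v ≤ T.edgeStab a b)) := by
    constructor
    · rintro ⟨⟨m⟩, ⟨m'⟩⟩
      exact ⟨GTree.ES_of_morphism T T' m, GTree.ES_of_morphism T' T m'⟩
    · rintro ⟨h1, h2⟩
      exact ⟨GTree.morphism_of_ES T T' hsame h1, GTree.morphism_of_ES T' T hsame' h2⟩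
  have hgen : ((∀ u v : T.V, T.graph.Adj u v →
          ∃ a b : T'.V, T'.graph.Adj a b ∧ T.edgeStab u v ≤ T'.edgeStab a b) ∧
       (∀ u v : T'.V, T'.graph.Adj u v →
          ∃ a b : T.V, T.graph.Adj a b ∧ T'.edgeStab u v ≤ T.edgeStab a b)) ↔
      (∀ H : Subgroup G, GenEdgeGroup T H ↔ GenEdgeGroup T' H) := by
    constructor
    · rintro ⟨h1, h2⟩ H
      constructor
      · rintro ⟨e1u, e1v, e2u, e2v, ha1, ha2, hl, hr⟩
        obtain ⟨a, b, hab, hle2⟩ := h1 e2u e2v ha2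
        obtain ⟨c, d, hcd, hle1⟩ := GTree.exists_small T T' hsame e1u e1v ha1
        exact ⟨c, d, a, b, hcd, hab, hle1.trans hl, hr.trans hle2⟩
      · rintro ⟨e1u, e1v, e2u, e2v, ha1, ha2, hl, hr⟩
        obtain ⟨a, b, hab, hle2⟩ := h2 e2u e2v ha2
        obtain ⟨c, d, hcd, hle1⟩ := GTree.exists_small T' T hsame' e1u e1v ha1
        exact ⟨c, d, a, b, hcd, hab, hle1.trans hl, hr.trans hle2⟩
    · intro hiff
      constructor
      · intro u v huv
        have hgenT : GenEdgeGroup T (T.edgeStab u v) :=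
          ⟨u, v, u, v, huv, huv, le_refl _, le_refl _⟩
        obtain ⟨c, d, a, b, hcd, hab, hl, hr⟩ := (hiff _).mp hgenT
        exact ⟨a, b, hab, hr⟩
      · intro u v huv
        have hgenT : GenEdgeGroup T' (T'.edgeStab u v) :=
          ⟨u, v, u, v, huv, huv, le_refl _, le_refl _⟩
        obtain ⟨c, d, a, b, hcd, hab, hl, hr⟩ := (hiff _).mpr hgenT
        exact ⟨a, b, hab, hr⟩
  have hbell : ((∀ u v : T.V, T.graph.Adj u v →
          ∃ a b : T'.V, T'.graph.Adj a b ∧ T.edgeStab u v ≤ T'.edgeStab a b) ∧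
       (∀ u v : T'.V, T'.graph.Adj u v →
          ∃ a b : T.V, T.graph.Adj a b ∧ T'.edgeStab u v ≤ T.edgeStab a b)) ↔
      (∀ H : Subgroup G, BiElliptic T H ↔ BiElliptic T' H) := by
    constructor
    · rintro ⟨h1, h2⟩ H
      rw [GTree.biElliptic_iff, GTree.biElliptic_iff]
      constructor
      · rintro ⟨a, b, hab, hle⟩
        obtain ⟨c, d, hcd, hle2⟩ := h1 a b hab
        exact ⟨c, d, hcd, hle.trans hle2⟩
      · rintro ⟨a, b, hab, hle⟩
        obtain ⟨c, d, hcd, hle2⟩ := h2 a b hab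
        exact ⟨c, d, hcd, hle.trans hle2⟩
    · intro hiff
      constructor
      · intro u v huv
        have hb : BiElliptic T (T.edgeStab u v) :=
          (GTree.biElliptic_iff T _).mpr ⟨u, v, huv, le_refl _⟩
        obtain ⟨a, b, hab, hle⟩ := (GTree.biElliptic_iff T' _).mp ((hiff _).mp hb)
        exact ⟨a, b, hab, hle⟩
      · intro u v huv
        have hb : BiElliptic T' (T'.edgeStab u v) :=
          (GTree.biElliptic_iff T' _).mpr ⟨u, v, huv, le_refl _⟩
        obtain ⟨a, b, hab, hle⟩ := (GTree.biElliptic_iff T _).mp ((hiff _).mpr hb)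
        exact ⟨a, b, hab, hle⟩
  refine ⟨hES1.trans hgen, hgen.symm.trans hbell, ?_⟩
  intro hr hr'
  exact hES1.mpr ⟨GTree.reduced_ES T T' hsame hr, GTree.reduced_ES T' T hsame' hr'⟩
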